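/- For every s, v ∈ V with v ≠ s: Δ'_{s•}(v) = Σ_{w : v ∈ P'_s(w) and w ∈ T(s)} (σ'_{sv}/σ'_{sw}) · (1 + Δ'_{s•}(w)) + Σ_{w : v ∈ P'_s(w) and w ∉ T(s)} (σ'_{sv}/σ'_{sw}) · Δ'_{s•}(w). -/

import Mathlib

set_option linter.unusedSectionVars false
set_option maxHeartbeats 1000000


open scoped BigOperators

/-- A directed graph on vertex set `V` with positive real edge weights. -/
structure WDigraph (V : Type*) where
  /-- the edge relation -/
  E : V → V → Prop
  /-- the edge weights -/
  w : V → V → ℝ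
  /-- weights of edges are positive -/
  pos : ∀ a b, E a b → 0 < w a b

namespace WDigraph

variable {V : Type*} [Fintype V] [DecidableEq V]

/-- `p` is a simple path from `s` to `t` in `G`: a nonempty list of pairwise
distinct vertices starting at `s`, ending at `t`, consecutive vertices joined
by edges. (Since all weights are positive, every shortest path is simple, so
it suffices to consider simple paths throughout.) -/
def IsPath (G : WDigraph V) (s t : V) (p : List V) : Prop :=
  List.Chain' G.E p ∧ p.head? = some s ∧ p.getLast? = some t ∧ p.Nodup

/-- The total weight of a list of vertices (sum of the weights of consecutive pairs). -/
def pw (G : WDigraph V) : List V → ℝ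
  | [] => 0
  | [_] => 0
  | a :: b :: r => G.w a b + G.pw (b :: r)

/-- `d(s,t)`: shortest-path distance from `s` to `t`, equal to `⊤` (infinity)
if `t` is unreachable from `s`. -/
noncomputable def dist (G : WDigraph V) (s t : V) : EReal :=
  sInf ((fun p => (G.pw p : EReal)) '' {p | G.IsPath s t p})

/-- The set of shortest `s`-`t` paths in `G`. -/
def SP (G : WDigraph V) (s t : V) : Set (List V) :=
  {p | G.IsPath s t p ∧ (G.pw p : EReal) = G.dist s t}

/-- `σ_{st}`: the number of shortest `s`-`t` paths in `G`. -/
noncomputable def sigma (G : WDigraph V) (s t : V) : ℕ :=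
  (G.SP s t).ncard

/-- `σ_{st}(v)`: the number of shortest `s`-`t` paths in `G` that contain `v`. -/
noncomputable def sigmaV (G : WDigraph V) (s t v : V) : ℕ :=
  {p ∈ G.SP s t | v ∈ p}.ncard

/-- `σ_{st}(v,w)`: the number of shortest `s`-`t` paths in `G` using the edge `(v,w)`. -/
noncomputable def sigmaE (G : WDigraph V) (s t v w : V) : ℕ :=
  {p ∈ G.SP s t | [v, w] <:+: p}.ncard

/-- `P_s(t)`: the set of predecessors of `t` with respect to source `s`:
nodes `y` with `(y,t) ∈ E` and `d(s,y) + ω(y,t) = d(s,t) < ∞`. -/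
def pred (G : WDigraph V) (s t : V) : Set V :=
  {y | G.E y t ∧ G.dist s y + (G.w y t : EReal) = G.dist s t ∧ G.dist s t < ⊤}

/-- `δ_{s•}(v)`: Brandes's one-sided dependency of `s` on `v`
(a summand is `0` whenever its denominator is `0`, which is automatic since
in Lean division by zero yields zero). -/
noncomputable def delta (G : WDigraph V) (s v : V) : ℝ :=
  ∑ᶠ t ∈ {t : V | t ≠ s ∧ t ≠ v}, (G.sigmaV s t v : ℝ) / (G.sigma s t : ℝ)

/-- `c_B(v)`: the betweenness centrality of `v`. -/
noncomputable def bc (G : WDigraph V) (v : V) : ℝ :=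
  ∑ᶠ s ∈ {s : V | s ≠ v}, G.delta s v

/-- `G'` is obtained from `G` by the incremental update `(u, v, ω'(u,v))`:
either a new edge `(u,v) ∉ E` is inserted with positive weight, or the weight
of the existing edge `(u,v)` is decreased; all other edges and weights are
unchanged. (Positivity of all weights is part of the `WDigraph` structure.) -/
structure IsUpdate (G G' : WDigraph V) (u v : V) : Prop where
  /-- the updated edge is present in `G'` -/
  edge' : G'.E u v
  /-- `E' = E ∪ {(u,v)}` -/
  edge_iff : ∀ a b, G'.E a b ↔ G.E a b ∨ a = u ∧ b = v
  /-- `ω'` agrees with `ω` on all edges other than `(u,v)` -/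
  weight_eq : ∀ a b, ¬(a = u ∧ b = v) → G'.w a b = G.w a b
  /-- either an insertion of a new edge, or a weight decrease of an existing one -/
  insert_or_decrease : ¬ G.E u v ∨ (G.E u v ∧ G'.w u v < G.w u v)

/-- `S(t)`: the affected sources of `t`. -/
def affS (G G' : WDigraph V) (t : V) : Set V :=
  {s | G.dist s t > G'.dist s t ∨ G.sigma s t ≠ G'.sigma s t}

/-- `T(s)`: the affected targets of `s`. -/
def affT (G G' : WDigraph V) (s : V) : Set V :=
  {t | G.dist s t > G'.dist s t ∨ G.sigma s t ≠ G'.sigma s t}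

/-- `Δ_{s•}(v) = Σ_{t ∈ T(s), t ≠ v} σ_{st}(v)/σ_{st}`, computed in `G`
(`0`-convention for zero denominators). -/
noncomputable def Delta (G G' : WDigraph V) (s v : V) : ℝ :=
  ∑ᶠ t ∈ {t : V | t ∈ affT G G' s ∧ t ≠ v}, (G.sigmaV s t v : ℝ) / (G.sigma s t : ℝ)

/-- `Δ'_{s•}(v) = Σ_{t ∈ T(s), t ≠ v} σ'_{st}(v)/σ'_{st}`, computed in `G'`
(`0`-convention for zero denominators). -/
noncomputable def Delta' (G G' : WDigraph V) (s v : V) : ℝ :=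
  ∑ᶠ t ∈ {t : V | t ∈ affT G G' s ∧ t ≠ v}, (G'.sigmaV s t v : ℝ) / (G'.sigma s t : ℝ)

variable {G : WDigraph V}

lemma pw_cons_cons (a b : V) (r : List V) : G.pw (a::b::r) = G.w a b + G.pw (b::r) := rfl

lemma pw_append (a : List V) (x : V) (b : List V) :
    G.pw (a ++ x :: b) = G.pw (a ++ [x]) + G.pw (x :: b) := by
  induction a with
  | nil =>
    cases b with
    | nil => simp [pw]
    | cons c r => simp [pw]
  | cons y a ih =>
    cases a with
    | nil => simp [pw, pw_cons_cons]
    | cons z a =>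
      simp only [List.cons_append, pw_cons_cons] at *
      rw [ih]; ring

lemma pw_nonneg {p : List V} (hc : List.Chain' G.E p) : 0 ≤ G.pw p := by
  induction p with
  | nil => simp [pw]
  | cons a q ih =>
    cases q with
    | nil => simp [pw]
    | cons b r =>
      rw [pw_cons_cons]
      have hab : G.E a b := (List.isChain_cons_cons.mp hc).1
      have := ih (List.isChain_cons_cons.mp hc).2
      have := G.pos a b hab
      linarith

lemma pw_pos {p : List V} (hc : List.Chain' G.E p) (hl : 2 ≤ p.length) : 0 < G.pw p := by
  match p, hl with
  | a :: b :: r, _ =>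
    rw [pw_cons_cons]
    have hab : G.E a b := (List.isChain_cons_cons.mp hc).1
    have := pw_nonneg (G := G) (List.isChain_cons_cons.mp hc).2
    have := G.pos a b hab
    linarith

lemma exists_dup_decomp {l : List V} (h : ¬ l.Nodup) :
    ∃ (a : List V) (y : V) (b c : List V), l = a ++ y :: b ++ y :: c := by
  induction l with
  | nil => simp at h
  | cons z r ih =>
    by_cases hz : z ∈ r
    · obtain ⟨b, c, rfl⟩ := List.append_of_mem hz
      exact ⟨[], z, b, c, by simp⟩
    · have hr : ¬ r.Nodup := fun hn => h (List.nodup_cons.mpr ⟨hz, hn⟩)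
      obtain ⟨a, y, b, c, rfl⟩ := ih hr
      exact ⟨z :: a, y, b, c, by simp⟩


/-- The set of s-t paths is finite. -/
lemma isPath_finite (G : WDigraph V) (s t : V) : {p | G.IsPath s t p}.Finite := by
  apply Set.Finite.subset (List.finite_length_le V (Fintype.card V))
  intro p hp
  exact hp.2.2.2.length_le_card

lemma SP_finite (G : WDigraph V) (s t : V) : (G.SP s t).Finite :=
  (G.isPath_finite s t).subset (fun p hp => hp.1)

lemma dist_le_pw_of_path {s t : V} {p : List V} (hp : G.IsPath s t p) :
    G.dist s t ≤ (G.pw p : EReal) :=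
  sInf_le ⟨p, hp, rfl⟩

/-- Walk bound: any chain from s to t weighs at least dist s t. -/
lemma dist_le_pw_walk {s t : V} {p : List V} (hc : List.Chain' G.E p)
    (hh : p.head? = some s) (hl : p.getLast? = some t) :
    G.dist s t ≤ (G.pw p : EReal) := by
  generalize hn : p.length = n
  induction n using Nat.strong_induction_on generalizing p with
  | _ n ih =>
    by_cases hnd : p.Nodup
    · exact dist_le_pw_of_path ⟨hc, hh, hl, hnd⟩
    · obtain ⟨a, y, b, c, rfl⟩ := exists_dup_decomp hnd
      have hinfix : (y :: (b ++ [y])) <:+: (a ++ y :: b ++ y :: c) := by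
        refine ⟨a, c, by simp⟩
      have hcyb : List.Chain' G.E (y :: (b ++ [y])) := hc.infix hinfix
      have hpos : 0 < G.pw (y :: (b ++ [y])) := pw_pos hcyb (by simp)
      -- the shortened walk
      have hc' : List.Chain' G.E (a ++ y :: c) := by
        rw [List.append_assoc, List.cons_append] at hc
        simp only [List.Chain'] at hc ⊢; rw [List.isChain_append] at hc ⊢
        refine ⟨hc.1, (hc.2.1.infix ⟨y :: b, [], by simp⟩ : _), ?_⟩
        intro x hx z hz
        exact hc.2.2 x hx z (by simpa using hz)
      have hh' : (a ++ y :: c).head? = some s := by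
        rw [List.append_assoc, List.cons_append] at hh
        rw [List.head?_append] at hh ⊢
        simpa using hh
      have hl' : (a ++ y :: c).getLast? = some t := by
        rw [List.append_assoc] at hl
        rw [List.getLast?_append] at hl ⊢
        rw [List.getLast?_append] at hl
        simpa [List.getLast?_cons, List.getLast?_eq_getLast] using hl
      have hlen : (a ++ y :: c).length < n := by
        subst hn; simp
      have hle := ih _ hlen hc' hh' hl' rfl
      refine hle.trans ?_
      rw [EReal.coe_le_coe_iff]
      have e1 : G.pw (a ++ y :: b ++ y :: c) = G.pw (a ++ y :: b ++ [y]) + G.pw (y :: c) := by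
        have := pw_append (G := G) (a ++ y :: b) y c
        simpa using this
      have e2 : G.pw (a ++ y :: (b ++ [y])) = G.pw (a ++ [y]) + G.pw (y :: (b ++ [y])) := by
        simpa using pw_append (G := G) a y (b ++ [y])
      have e3 : G.pw (a ++ y :: c) = G.pw (a ++ [y]) + G.pw (y :: c) :=
        pw_append (G := G) a y c
      have e12 : G.pw (a ++ y :: b ++ [y]) = G.pw (a ++ y :: (b ++ [y])) := by
        simp
      rw [e1, e12, e2, e3]
      linarith



/-- Strict walk bound for non-simple walks. -/
lemma dist_lt_pw_walk {s t : V} {p : List V} (hc : List.Chain' G.E p)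
    (hh : p.head? = some s) (hl : p.getLast? = some t) (hnd : ¬ p.Nodup) :
    G.dist s t < (G.pw p : EReal) := by
  obtain ⟨a, y, b, c, rfl⟩ := exists_dup_decomp hnd
  have hinfix : (y :: (b ++ [y])) <:+: (a ++ y :: b ++ y :: c) := ⟨a, c, by simp⟩
  have hpos : 0 < G.pw (y :: (b ++ [y])) := pw_pos (hc.infix hinfix) (by simp)
  have hc' : List.Chain' G.E (a ++ y :: c) := by
    rw [List.append_assoc, List.cons_append] at hc
    simp only [List.Chain'] at hc ⊢; rw [List.isChain_append] at hc ⊢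
    refine ⟨hc.1, (hc.2.1.infix ⟨y :: b, [], by simp⟩ : _), ?_⟩
    intro x hx z hz
    exact hc.2.2 x hx z (by simpa using hz)
  have hh' : (a ++ y :: c).head? = some s := by
    rw [List.append_assoc, List.cons_append] at hh
    rw [List.head?_append] at hh ⊢
    simpa using hh
  have hl' : (a ++ y :: c).getLast? = some t := by
    rw [List.append_assoc] at hl
    rw [List.getLast?_append] at hl ⊢
    rw [List.getLast?_append] at hl
    simpa [List.getLast?_cons, List.getLast?_eq_getLast] using hl
  have hle := dist_le_pw_walk (G := G) hc' hh' hl'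
  refine hle.trans_lt ?_
  rw [EReal.coe_lt_coe_iff]
  have e1 : G.pw (a ++ y :: b ++ y :: c) = G.pw (a ++ y :: b ++ [y]) + G.pw (y :: c) := by
    simpa using pw_append (G := G) (a ++ y :: b) y c
  have e2 : G.pw (a ++ y :: (b ++ [y])) = G.pw (a ++ [y]) + G.pw (y :: (b ++ [y])) := by
    simpa using pw_append (G := G) a y (b ++ [y])
  have e3 : G.pw (a ++ y :: c) = G.pw (a ++ [y]) + G.pw (y :: c) := pw_append (G := G) a y c
  have e12 : G.pw (a ++ y :: b ++ [y]) = G.pw (a ++ y :: (b ++ [y])) := by simp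
  rw [e1, e12, e2, e3]
  linarith

lemma exists_SP {s t : V} (h : G.dist s t < ⊤) : ∃ p, p ∈ G.SP s t := by
  have hne : ((fun p => (G.pw p : EReal)) '' {p | G.IsPath s t p}).Nonempty := by
    by_contra hcon
    rw [Set.not_nonempty_iff_eq_empty] at hcon
    have : G.dist s t = ⊤ := by rw [dist, hcon, sInf_empty]
    rw [this] at h; exact lt_irrefl _ h
  have hfin : ((fun p => (G.pw p : EReal)) '' {p | G.IsPath s t p}).Finite :=
    (G.isPath_finite s t).image _
  have := hne.csInf_mem hfin
  obtain ⟨p, hp, hpe⟩ := this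
  exact ⟨p, hp, hpe⟩

lemma SP_dist_lt_top {s t : V} {p : List V} (hp : p ∈ G.SP s t) : G.dist s t < ⊤ := by
  rw [← hp.2]; exact EReal.coe_lt_top _

lemma sigma_ne_zero {s t : V} (h : G.dist s t < ⊤) : G.sigma s t ≠ 0 := by
  obtain ⟨p, hp⟩ := exists_SP h
  have : 0 < (G.SP s t).ncard := (Set.ncard_pos (G.SP_finite s t)).mpr ⟨p, hp⟩
  exact Nat.pos_iff_ne_zero.mp this

lemma sigma_eq_zero {s t : V} (h : ¬ G.dist s t < ⊤) : G.sigma s t = 0 := by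
  have : G.SP s t = ∅ := by
    ext p; simp only [Set.mem_empty_iff_false, iff_false]
    intro hp; exact h (SP_dist_lt_top hp)
  rw [sigma, this, Set.ncard_empty]

lemma dist_nonneg (G : WDigraph V) (s t : V) : 0 ≤ G.dist s t := by
  refine le_sInf ?_
  rintro x ⟨p, hp, rfl⟩
  show (0 : EReal) ≤ (G.pw p : EReal)
  exact_mod_cast pw_nonneg hp.1



lemma getLast?_append_cons (a : List V) (y : V) (b : List V) :
    (a ++ y :: b).getLast? = (y :: b).getLast? := by
  rw [List.getLast?_append]
  rw [List.getLast?_eq_getLast (l := y :: b) (by simp)]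
  simp

lemma eq_dropLast_append {q : List V} {y : V} (hl : q.getLast? = some y) :
    q = q.dropLast ++ [y] := by
  have hne : q ≠ [] := by rintro rfl; simp at hl
  have := List.getLast?_eq_getLast (l := q) hne
  rw [this] at hl
  injection hl with hl
  rw [← hl]
  exact (List.dropLast_append_getLast hne).symm

/-- Splitting a shortest path at an intermediate vertex. -/
lemma split_SP {s t y : V} {a b : List V} (hp : (a ++ y :: b) ∈ G.SP s t) :
    (a ++ [y]) ∈ G.SP s y ∧ G.dist s y + (G.pw (y :: b) : EReal) = G.dist s t := by
  obtain ⟨⟨hc, hh, hl, hnd⟩, hpw⟩ := hp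
  have hc1 : List.Chain' G.E (a ++ [y]) := hc.infix ⟨[], b, by simp⟩
  have hh1 : (a ++ [y]).head? = some s := by
    rw [List.head?_append] at hh ⊢; simpa using hh
  have hl1 : (a ++ [y]).getLast? = some y := by
    rw [getLast?_append_cons]; simp
  have hinf1 : (a ++ [y]) <:+: (a ++ y :: b) := ⟨[], b, by simp⟩
  have hnd1 : (a ++ [y]).Nodup := hnd.sublist hinf1.sublist
  have hpath1 : G.IsPath s y (a ++ [y]) := ⟨hc1, hh1, hl1, hnd1⟩
  have h1 : G.dist s y ≤ (G.pw (a ++ [y]) : EReal) := dist_le_pw_of_path hpath1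
  obtain ⟨q, hqP, hqD⟩ := exists_SP (h1.trans_lt (EReal.coe_lt_top _))
  have hqy : q = q.dropLast ++ [y] := eq_dropLast_append hqP.2.2.1
  -- the walk W = q.dropLast ++ y :: b
  have hcW : List.Chain' G.E (q.dropLast ++ y :: b) := by
    simp only [List.Chain']; rw [List.isChain_append]
    refine ⟨hqP.1.infix ⟨[], [y], by simpa using hqy.symm⟩, hc.infix ⟨a, [], by simp⟩, ?_⟩
    have := (List.isChain_append).mp (hqy ▸ hqP.1)
    intro x hx z hz
    simp only [List.head?_cons, Option.mem_def, Option.some.injEq] at hz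
    subst hz
    exact this.2.2 x hx y (by simp)
  have hhW : (q.dropLast ++ y :: b).head? = some s := by
    have := hqP.2.1
    rw [hqy, List.head?_append] at this
    rw [List.head?_append]
    simpa using this
  have hlW : (q.dropLast ++ y :: b).getLast? = some t := by
    rw [getLast?_append_cons]
    rw [getLast?_append_cons] at hl
    exact hl
  have hbound : G.dist s t ≤ (G.pw (q.dropLast ++ y :: b) : EReal) :=
    dist_le_pw_walk hcW hhW hlW
  have epwW : G.pw (q.dropLast ++ y :: b) = G.pw q + G.pw (y :: b) := by
    rw [pw_append]
    congr 1
    rw [← hqy]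
  have epwP : G.pw (a ++ y :: b) = G.pw (a ++ [y]) + G.pw (y :: b) := pw_append a y b
  -- now real arithmetic
  have hqle : G.pw q ≤ G.pw (a ++ [y]) := by
    have := hqD ▸ h1
    exact_mod_cast this
  have hple : G.pw (a ++ [y]) ≤ G.pw q := by
    have h2 : (G.pw (a ++ y :: b) : EReal) ≤ (G.pw (q.dropLast ++ y :: b) : EReal) :=
      hpw ▸ hbound
    rw [epwW, epwP] at h2
    have h3 : G.pw (a ++ [y]) + G.pw (y :: b) ≤ G.pw q + G.pw (y :: b) := by exact_mod_cast h2
    linarith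
  have heq : G.pw (a ++ [y]) = G.pw q := le_antisymm hple hqle
  have hdy : (G.pw (a ++ [y]) : EReal) = G.dist s y := by rw [heq, hqD]
  constructor
  · exact ⟨hpath1, hdy⟩
  · rw [← hdy, ← hpw, epwP]
    exact (EReal.coe_add _ _).symm

/-- Splicing a shortest path to `y` with an optimal continuation. -/
lemma splice_SP {s t y : V} {q b : List V} (hq : q ∈ G.SP s y)
    (hcb : List.Chain' G.E (y :: b)) (hlb : (y :: b).getLast? = some t)
    (hw : G.dist s y + (G.pw (y :: b) : EReal) = G.dist s t) :
    q.dropLast ++ y :: b ∈ G.SP s t ∧ q.dropLast ++ y :: b = q ++ b := by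
  obtain ⟨hqP, hqD⟩ := hq
  have hqy : q = q.dropLast ++ [y] := eq_dropLast_append hqP.2.2.1
  have hqb : q.dropLast ++ y :: b = q ++ b := by
    conv_rhs => rw [hqy]
    simp
  have hcW : List.Chain' G.E (q.dropLast ++ y :: b) := by
    simp only [List.Chain']; rw [List.isChain_append]
    refine ⟨hqP.1.infix ⟨[], [y], by simpa using hqy.symm⟩, hcb, ?_⟩
    have := (List.isChain_append).mp (hqy ▸ hqP.1)
    intro x hx z hz
    simp only [List.head?_cons, Option.mem_def, Option.some.injEq] at hz
    subst hz
    exact this.2.2 x hx y (by simp)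
  have hhW : (q.dropLast ++ y :: b).head? = some s := by
    have := hqP.2.1
    rw [hqy, List.head?_append] at this
    rw [List.head?_append]
    simpa using this
  have hlW : (q.dropLast ++ y :: b).getLast? = some t := by
    rw [getLast?_append_cons]; exact hlb
  have epwW : G.pw (q.dropLast ++ y :: b) = G.pw q + G.pw (y :: b) := by
    rw [pw_append]; congr 1; rw [← hqy]
  have hdW : (G.pw (q.dropLast ++ y :: b) : EReal) = G.dist s t := by
    rw [epwW, EReal.coe_add, hqD, hw]
  have hndW : (q.dropLast ++ y :: b).Nodup := by
    by_contra hcon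
    have := dist_lt_pw_walk hcW hhW hlW hcon
    rw [hdW] at this
    exact lt_irrefl _ this
  exact ⟨⟨⟨hcW, hhW, hlW, hndW⟩, hdW⟩, hqb⟩



lemma mem_of_getLast? {l : List V} {t : V} (h : l.getLast? = some t) : t ∈ l := by
  rw [eq_dropLast_append h]; simp

lemma ncard_prod (S : Set (List V)) (T : Set (List V)) :
    (S ×ˢ T).ncard = S.ncard * T.ncard := by
  rw [← Nat.card_coe_set_eq, ← Nat.card_coe_set_eq, ← Nat.card_coe_set_eq,
    Nat.card_congr (Equiv.Set.prod S T), Nat.card_prod]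

lemma takeWhile_split {a b : List V} {w : V} (h : w ∉ a) :
    (a ++ w :: b).takeWhile (· != w) = a ∧ (a ++ w :: b).dropWhile (· != w) = w :: b := by
  induction a with
  | nil => simp [List.takeWhile_cons, List.dropWhile_cons]
  | cons y a ih =>
    have hy : y ≠ w := fun hyw => h (by simp [hyw])
    have := ih (fun hw => h (by simp [hw]))
    simp only [List.cons_append, List.takeWhile_cons, List.dropWhile_cons,
      bne_iff_ne, ne_eq, hy, not_false_eq_true, if_true, if_pos]
    exact ⟨by rw [this.1], this.2⟩

/-- Unique decomposition at a vertex not in the prefix. -/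
lemma decomp_unique {a a' b b' : List V} {w : V} (h : w ∉ a) (h' : w ∉ a')
    (heq : a ++ w :: b = a' ++ w :: b') : a = a' ∧ b = b' := by
  have t1 := takeWhile_split (a := a) (b := b) h
  have t2 := takeWhile_split (a := a') (b := b') h'
  rw [heq] at t1
  refine ⟨t1.1.symm.trans t2.1, ?_⟩
  have := t1.2.symm.trans t2.2
  injection this

/-- The set of optimal continuations from `w` to `t` (relative to source `s`). -/
def Suf (G : WDigraph V) (s t w : V) : Set (List V) :=
  {b | List.Chain' G.E (w :: b) ∧ (w :: b).getLast? = some t ∧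
    G.dist s w + (G.pw (w :: b) : EReal) = G.dist s t}



lemma pred_lt {s x w : V} (hx : x ∈ G.pred s w) :
    G.dist s x < G.dist s w ∧ G.dist s x < ⊤ ∧ w ≠ x := by
  obtain ⟨he, heq, hlt⟩ := hx
  have hxt : G.dist s x < ⊤ := by
    by_contra h
    have : G.dist s x = ⊤ := top_le_iff.mp (not_lt.mp h)
    rw [this] at heq
    rw [EReal.top_add_coe] at heq
    rw [← heq] at hlt
    exact lt_irrefl _ hlt
  have hxb : G.dist s x ≠ ⊥ := fun h => by
    have := G.dist_nonneg s x; rw [h] at this; simp at this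
  set r := (G.dist s x).toReal with hr
  have hcoe : G.dist s x = (r : EReal) := (EReal.coe_toReal (ne_of_lt hxt) hxb).symm
  have hw : G.dist s w = ((r + G.w x w : ℝ) : EReal) := by
    rw [← heq, hcoe, ← EReal.coe_add]
  have hlt2 : G.dist s x < G.dist s w := by
    rw [hcoe, hw, EReal.coe_lt_coe_iff]
    have := G.pos x w he
    linarith
  exact ⟨hlt2, hxt, fun hwx => by rw [hwx] at hlt2; exact lt_irrefl _ hlt2⟩

lemma not_mem_of_pred {s x w : V} (hx : x ∈ G.pred s w) {q : List V}
    (hq : q ∈ G.SP s x) : w ∉ q := by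
  intro hw
  obtain ⟨a, b, rfl⟩ := List.append_of_mem hw
  obtain ⟨_, hd⟩ := split_SP hq
  have h1 : G.dist s w ≤ G.dist s x := by
    calc G.dist s w = G.dist s w + 0 := by rw [add_zero]
    _ ≤ G.dist s w + (G.pw (w :: b) : EReal) := by
        apply add_le_add le_rfl
        exact_mod_cast pw_nonneg (hq.1.1.infix ⟨a, [], by simp⟩)
    _ = G.dist s x := hd
  exact absurd (pred_lt hx).1 (not_lt.mpr h1)

lemma cons_SP {s x w : V} (hx : x ∈ G.pred s w) {q : List V} (hq : q ∈ G.SP s x) :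
    q ++ [w] ∈ G.SP s w := by
  have hqx : q = q.dropLast ++ [x] := eq_dropLast_append hq.1.2.2.1
  refine ⟨⟨?_, ?_, ?_, ?_⟩, ?_⟩
  · simp only [List.Chain']; rw [List.isChain_append]
    refine ⟨hq.1.1, List.isChain_singleton w, ?_⟩
    intro z hz u hu
    rw [hq.1.2.2.1] at hz
    simp only [Option.mem_def, Option.some.injEq, List.head?_cons] at hz hu
    rw [← hz, ← hu]
    exact hx.1
  · rw [List.head?_append]
    rw [hq.1.2.1]
    rfl
  · rw [getLast?_append_cons]
    rfl
  · rw [List.nodup_append]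
    refine ⟨hq.1.2.2.2, List.nodup_singleton w, ?_⟩
    intro z hz y hzw hzy
    simp only [List.mem_singleton] at hzw
    subst hzw
    exact not_mem_of_pred hx hq (hzy ▸ hz)
  · have e1 : G.pw (q ++ [w]) = G.pw q + G.w x w := by
      conv_lhs => rw [hqx]
      rw [List.append_assoc, List.singleton_append, pw_append q.dropLast x [w]]
      have : G.pw [x, w] = G.w x w := by simp [pw]
      rw [this, ← hqx]
    rw [e1, EReal.coe_add, hq.2]
    exact hx.2.1

/-- Claim 1: paths through `w` factor as (shortest s-w path, optimal continuation). -/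
lemma sigmaV_factor (s t w : V) :
    G.sigmaV s t w = G.sigma s w * (G.Suf s t w).ncard := by
  classical
  set f : List V → List V × List V :=
    fun p => (p.takeWhile (· != w) ++ [w], (p.dropWhile (· != w)).tail) with hf
  have key : ∀ {a b : List V}, w ∉ a → f (a ++ w :: b) = (a ++ [w], b) := by
    intro a b h
    obtain ⟨h1, h2⟩ := takeWhile_split (b := b) h
    simp [hf, h1, h2]
  have hbij : Set.BijOn f {p ∈ G.SP s t | w ∈ p} (G.SP s w ×ˢ G.Suf s t w) := by
    refine ⟨?_, ?_, ?_⟩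
    · rintro p ⟨hp, hwp⟩
      obtain ⟨a, b, rfl⟩ := List.append_of_mem hwp
      have hwa : w ∉ a := by
        have hnd := hp.1.2.2.2
        rw [List.nodup_append] at hnd
        exact fun h => hnd.2.2 _ h _ (by simp) rfl
      obtain ⟨hpre, hdist⟩ := split_SP hp
      rw [key hwa]
      refine ⟨hpre, ?_, ?_, hdist⟩
      · exact hp.1.1.infix ⟨a, [], by simp⟩
      · rw [← getLast?_append_cons a w b]
        exact hp.1.2.2.1
    · have hrec : ∀ p ∈ {p ∈ G.SP s t | w ∈ p}, p = (f p).1 ++ (f p).2 := by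
        rintro p ⟨hp, hwp⟩
        obtain ⟨a, b, rfl⟩ := List.append_of_mem hwp
        have hwa : w ∉ a := by
          have hnd := hp.1.2.2.2
          rw [List.nodup_append] at hnd
          exact fun h => hnd.2.2 _ h _ (by simp) rfl
        rw [key hwa]
        simp
      intro p hp p' hp' hff
      rw [hrec p hp, hrec p' hp', hff]
    · rintro ⟨q, b⟩ ⟨hq, hb⟩
      obtain ⟨hsp, hqb⟩ := splice_SP hq hb.1 hb.2.1 hb.2.2
      have hwq : w ∉ q.dropLast := by
        have hnd := hq.1.2.2.2
        conv at hnd => rw [eq_dropLast_append hq.1.2.2.1]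
        rw [List.nodup_append] at hnd
        exact fun h => hnd.2.2 _ h _ (by simp) rfl
      refine ⟨q.dropLast ++ w :: b, ⟨hsp, by simp⟩, ?_⟩
      rw [key hwq]
      rw [← eq_dropLast_append hq.1.2.2.1]
  rw [sigmaV, ← Set.ncard_image_of_injOn hbij.injOn, hbij.image_eq, ncard_prod]
  rfl

/-- Claim 2: paths using edge `(x,w)` factor as (shortest s-x path, optimal continuation from w). -/
lemma sigmaE_factor {s x w : V} (t : V) (hx : x ∈ G.pred s w) :
    G.sigmaE s t x w = G.sigma s x * (G.Suf s t w).ncard := by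
  classical
  set f : List V → List V × List V :=
    fun p => (p.takeWhile (· != x) ++ [x], ((p.dropWhile (· != x)).tail).tail) with hf
  have key : ∀ {a b : List V}, x ∉ a → f (a ++ x :: w :: b) = (a ++ [x], b) := by
    intro a b h
    obtain ⟨h1, h2⟩ := takeWhile_split (b := w :: b) h
    simp [hf, h1, h2]
  have hbij : Set.BijOn f {p ∈ G.SP s t | [x, w] <:+: p} (G.SP s x ×ˢ G.Suf s t w) := by
    refine ⟨?_, ?_, ?_⟩
    · rintro p ⟨hp, hinf⟩
      obtain ⟨a, c, hpe⟩ := hinf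
      have hpe' : a ++ x :: w :: c = p := by simpa using hpe
      subst hpe'
      have hxa : x ∉ a := by
        have hnd := hp.1.2.2.2
        rw [List.nodup_append] at hnd
        exact fun h => hnd.2.2 _ h _ (by simp) rfl
      obtain ⟨hpre, _⟩ := split_SP (b := w :: c) hp
      have hp2 : ((a ++ [x]) ++ w :: c) ∈ G.SP s t := by
        rw [List.append_assoc]; simpa using hp
      obtain ⟨_, hdist2⟩ := split_SP hp2
      rw [key hxa]
      refine ⟨hpre, ?_, ?_, hdist2⟩
      · exact hp.1.1.infix ⟨a ++ [x], [], by simp⟩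
      · rw [← getLast?_append_cons (a ++ [x]) w c]
        have : (a ++ [x]) ++ w :: c = a ++ x :: w :: c := by simp
        rw [this]
        exact hp.1.2.2.1
    · have hrec : ∀ p ∈ {p ∈ G.SP s t | [x, w] <:+: p}, p = (f p).1 ++ w :: (f p).2 := by
        rintro p ⟨hp, hinf⟩
        obtain ⟨a, c, hpe⟩ := hinf
        have hpe' : a ++ x :: w :: c = p := by simpa using hpe
        subst hpe'
        have hxa : x ∉ a := by
          have hnd := hp.1.2.2.2
          rw [List.nodup_append] at hnd
          exact fun h => hnd.2.2 _ h _ (by simp) rfl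
        rw [key hxa]
        simp
      intro p hp p' hp' hff
      rw [hrec p hp, hrec p' hp', hff]
    · rintro ⟨q, b⟩ ⟨hq, hb⟩
      have hq' : q ++ [w] ∈ G.SP s w := cons_SP hx hq
      obtain ⟨hsp, _⟩ := splice_SP hq' hb.1 hb.2.1 hb.2.2
      rw [List.dropLast_concat] at hsp
      have hqx : q = q.dropLast ++ [x] := eq_dropLast_append hq.1.2.2.1
      have hxq : x ∉ q.dropLast := by
        have hnd := hq.1.2.2.2
        conv at hnd => rw [hqx]
        rw [List.nodup_append] at hnd
        exact fun h => hnd.2.2 _ h _ (by simp) rfl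
      refine ⟨q ++ w :: b, ⟨hsp, ⟨q.dropLast, b, by rw [hqx]; simp⟩⟩, ?_⟩
      have : q ++ w :: b = q.dropLast ++ x :: w :: b := by rw [hqx]; simp
      rw [this, key hxq, ← hqx]
  rw [sigmaE, ← Set.ncard_image_of_injOn hbij.injOn, hbij.image_eq, ncard_prod]
  rfl

/-- If `x` is not a predecessor of `w`, no shortest path uses edge `(x,w)`. -/
lemma sigmaE_zero {s x w : V} (t : V) (hx : x ∉ G.pred s w) : G.sigmaE s t x w = 0 := by
  have : {p ∈ G.SP s t | [x, w] <:+: p} = ∅ := by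
    ext p
    simp only [Set.mem_setOf_eq, Set.mem_empty_iff_false, iff_false, not_and]
    intro hp hinf
    obtain ⟨a, c, hpe⟩ := hinf
    have hpe' : a ++ x :: w :: c = p := by simpa using hpe
    subst hpe'
    apply hx
    obtain ⟨hpre, _⟩ := split_SP (b := w :: c) hp
    have hp2 : ((a ++ [x]) ++ w :: c) ∈ G.SP s t := by
      rw [List.append_assoc]; simpa using hp
    obtain ⟨hpre2, _⟩ := split_SP hp2
    have he : G.E x w := by
      have hch : List.Chain' G.E [x, w] := hp.1.1.infix ⟨a, c, by simp⟩
      exact (List.isChain_cons_cons.mp hch).1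
    have hdw : G.dist s w = (G.pw ((a ++ [x]) ++ [w]) : EReal) := hpre2.2.symm
    have hdx : G.dist s x = (G.pw (a ++ [x]) : EReal) := hpre.2.symm
    have hpw : G.pw ((a ++ [x]) ++ [w]) = G.pw (a ++ [x]) + G.w x w := by
      rw [List.append_assoc, List.singleton_append, pw_append a x [w]]
      have : G.pw [x, w] = G.w x w := by simp [pw]
      rw [this]
    refine ⟨he, ?_, ?_⟩
    · rw [hdx, hdw, hpw, EReal.coe_add]
    · rw [hdw]; exact EReal.coe_lt_top _
  rw [sigmaE, this, Set.ncard_empty]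



lemma sigmaV_self (s t : V) : G.sigmaV s t t = G.sigma s t := by
  rw [sigmaV, sigma]
  congr 1
  ext p
  simp only [Set.mem_setOf_eq, and_iff_left_iff_imp]
  intro hp
  exact mem_of_getLast? hp.1.2.2.1

lemma sigmaV_pred_zero {s x w : V} (hx : x ∈ G.pred s w) : G.sigmaV s x w = 0 := by
  rw [sigmaV]
  have : {p ∈ G.SP s x | w ∈ p} = ∅ := by
    ext p
    simp only [Set.mem_setOf_eq, Set.mem_empty_iff_false, iff_false, not_and]
    exact fun hp => not_mem_of_pred hx hp
  rw [this, Set.ncard_empty]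


/-- Decomposition of paths through `x` according to the successor of `x`. -/
lemma sigmaV_decomp {s x : V} (t : V) (ht : t ≠ x) :
    G.sigmaV s t x = ∑ w : V, G.sigmaE s t x w := by
  classical
  set F := (G.SP_finite s t).toFinset with hF
  have hmem : ∀ p, p ∈ F ↔ p ∈ G.SP s t := fun p => Set.Finite.mem_toFinset _
  have e1 : G.sigmaV s t x = (F.filter (fun p => x ∈ p)).card := by
    rw [sigmaV, ← Set.ncard_coe_finset]
    congr 1
    ext p
    simp only [Set.mem_setOf_eq, Finset.coe_filter, hmem]
  have e2 : ∀ w, G.sigmaE s t x w = (F.filter (fun p => [x, w] <:+: p)).card := by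
    intro w
    rw [sigmaE, ← Set.ncard_coe_finset]
    congr 1
    ext p
    simp only [Set.mem_setOf_eq, Finset.coe_filter, hmem]
  have hunion : F.filter (fun p => x ∈ p) =
      Finset.univ.biUnion (fun w => F.filter (fun p => [x, w] <:+: p)) := by
    ext p
    simp only [Finset.mem_filter, Finset.mem_biUnion, Finset.mem_univ, true_and]
    constructor
    · rintro ⟨hpF, hxp⟩
      obtain ⟨a, b, rfl⟩ := List.append_of_mem hxp
      have hp := (hmem _).mp hpF
      cases b with
      | nil =>
        exfalso
        have := hp.1.2.2.1
        rw [getLast?_append_cons] at this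
        simp only [List.getLast?_singleton, Option.some.injEq] at this
        exact ht this.symm
      | cons z b' =>
        exact ⟨z, hpF, ⟨a, b', by simp⟩⟩
    · rintro ⟨w, hpF, hinf⟩
      exact ⟨hpF, hinf.sublist.subset (by simp)⟩
  have hdisj : ∀ w ∈ Finset.univ, ∀ w' ∈ Finset.univ, w ≠ w' →
      Disjoint (F.filter (fun p => [x, w] <:+: p)) (F.filter (fun p => [x, w'] <:+: p)) := by
    intro w _ w' _ hww
    rw [Finset.disjoint_left]
    rintro p hp hp'
    rw [Finset.mem_filter] at hp hp'
    obtain ⟨a, c, hpe⟩ := hp.2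
    obtain ⟨a', c', hpe'⟩ := hp'.2
    have h1 : a ++ x :: w :: c = p := by simpa using hpe
    have h2 : a' ++ x :: w' :: c' = p := by simpa using hpe'
    have hnd := ((hmem _).mp hp.1).1.2.2.2
    have hxa : x ∉ a := by
      rw [← h1, List.nodup_append] at hnd
      exact fun h => hnd.2.2 _ h _ (by simp) rfl
    have hxa' : x ∉ a' := by
      rw [← h2, List.nodup_append] at hnd
      exact fun h => hnd.2.2 _ h _ (by simp) rfl
    have := decomp_unique hxa hxa' (h1.trans h2.symm)
    have := this.2
    injection this with hww' _
    exact hww hww'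
  rw [e1, hunion, Finset.card_biUnion hdisj]
  exact Finset.sum_congr rfl (fun w _ => (e2 w).symm)

open scoped Classical in
/-- Per-target Brandes identity. -/
lemma per_target {s x : V} (t : V) (ht : t ≠ x) :
    (G.sigmaV s t x : ℝ) / (G.sigma s t : ℝ) =
      ∑ w : V, (if x ∈ G.pred s w then
        (G.sigma s x : ℝ) / (G.sigma s w : ℝ) * ((G.sigmaV s t w : ℝ) / (G.sigma s t : ℝ))
        else 0) := by
  by_cases hd : G.dist s t < ⊤
  · rw [sigmaV_decomp t ht]
    push_cast
    rw [Finset.sum_div]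
    refine Finset.sum_congr rfl (fun w _ => ?_)
    by_cases hx : x ∈ G.pred s w
    · rw [if_pos hx, sigmaE_factor t hx, sigmaV_factor s t w]
      have hsw : (G.sigma s w : ℝ) ≠ 0 := by
        have := sigma_ne_zero (G := G) (s := s) (t := w) hx.2.2
        exact_mod_cast this
      push_cast
      have key : ∀ (A B C D : ℝ), D ≠ 0 → A / D * (D * B / C) = A * B / C := by
        intro A B C D hD
        rw [div_mul_div_comm, show A * (D * B) = D * (A * B) by ring]
        exact mul_div_mul_left _ _ hD
      exact (key _ _ _ _ hsw).symm
    · rw [if_neg hx, sigmaE_zero t hx]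
      simp
  · have h0 : G.sigma s t = 0 := sigma_eq_zero hd
    rw [h0]
    simp



/-- For every `s, x ∈ V` with `x ≠ s`:
`Δ'_{s•}(x) = Σ_{w : x ∈ P'_s(w), w ∈ T(s)} (σ'_{sx}/σ'_{sw})·(1 + Δ'_{s•}(w))
            + Σ_{w : x ∈ P'_s(w), w ∉ T(s)} (σ'_{sx}/σ'_{sw})·Δ'_{s•}(w)`. -/
theorem Delta'_recursion (G G' : WDigraph V) (u v : V)
    (h : IsUpdate G G' u v) (s x : V) (hxs : x ≠ s) :
    Delta' G G' s x =
      (∑ᶠ w ∈ {w : V | x ∈ G'.pred s w ∧ w ∈ affT G G' s},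
        (G'.sigma s x : ℝ) / (G'.sigma s w : ℝ) * (1 + Delta' G G' s w)) +
      ∑ᶠ w ∈ {w : V | x ∈ G'.pred s w ∧ w ∉ affT G G' s},
        (G'.sigma s x : ℝ) / (G'.sigma s w : ℝ) * Delta' G G' s w := by
  classical
  set T : Set V := affT G G' s with hT
  set d : V → V → ℝ := fun t v => (G'.sigmaV s t v : ℝ) / (G'.sigma s t : ℝ) with hd
  set g : V → ℝ := fun w => (G'.sigma s x : ℝ) / (G'.sigma s w : ℝ) with hg
  have hfin : ∀ (S : Set V) (f : V → ℝ),
      ∑ᶠ t ∈ S, f t = ∑ t ∈ Finset.univ.filter (· ∈ S), f t := by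
    intro S f
    rw [← finsum_mem_coe_finset]
    congr 1
    ext t; simp
  have hDelta : ∀ v : V, Delta' G G' s v
      = ∑ t ∈ Finset.univ, (if t ∈ T ∧ t ≠ v then d t v else 0) := by
    intro v
    rw [Delta', hfin, Finset.sum_filter]
    refine Finset.sum_congr rfl fun t _ => ?_
    by_cases h : t ∈ T ∧ t ≠ v
    · rw [if_pos h, if_pos (by exact h)]
    · rw [if_neg h, if_neg (by exact h)]
  have step1 : Delta' G G' s x
      = ∑ w ∈ Finset.univ, (if x ∈ G'.pred s w then
          g w * ∑ t ∈ Finset.univ, (if t ∈ T ∧ t ≠ x then d t w else 0) else 0) := by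
    rw [hDelta x]
    have e : ∀ t, (if t ∈ T ∧ t ≠ x then d t x else 0)
        = ∑ w ∈ Finset.univ, (if t ∈ T ∧ t ≠ x then
            (if x ∈ G'.pred s w then g w * d t w else 0) else 0) := by
      intro t
      by_cases h : t ∈ T ∧ t ≠ x
      · simp only [if_pos h]
        exact per_target t h.2
      · simp [h]
    rw [Finset.sum_congr rfl (fun t _ => e t), Finset.sum_comm]
    refine Finset.sum_congr rfl fun w _ => ?_
    by_cases hw : x ∈ G'.pred s w
    · simp only [hw, if_true]
      rw [Finset.mul_sum]
      refine Finset.sum_congr rfl fun t _ => ?_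
      by_cases h : t ∈ T ∧ t ≠ x <;> simp [h, hw]
    · simp [hw]
  have hinner : ∀ w, x ∈ G'.pred s w →
      (∑ t ∈ Finset.univ, if t ∈ T ∧ t ≠ x then d t w else 0)
      = (∑ t ∈ Finset.univ, if t ∈ T ∧ t ≠ w then d t w else 0)
        + (if w ∈ T then 1 else 0) := by
    intro w hw
    have hwx : w ≠ x := (pred_lt hw).2.2
    have hdx : d x w = 0 := by
      rw [hd]; simp only; rw [sigmaV_pred_zero hw]; simp
    have hsw : G'.sigma s w ≠ 0 := sigma_ne_zero hw.2.2
    have hdww : d w w = 1 := by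
      rw [hd]; simp only; rw [sigmaV_self]
      exact div_self (by exact_mod_cast hsw)
    have hconst : (if w ∈ T then (1:ℝ) else 0)
        = ∑ t ∈ Finset.univ, (if t = w then (if w ∈ T then (1:ℝ) else 0) else 0) := by
      simp
    rw [hconst, ← Finset.sum_add_distrib]
    refine Finset.sum_congr rfl fun t _ => ?_
    by_cases htw : t = w
    · rw [htw]
      rw [if_pos (show w = w from rfl), if_neg (show ¬(w ∈ T ∧ w ≠ w) from fun hh => hh.2 rfl),
        zero_add]
      by_cases hwT : w ∈ T
      · rw [if_pos (show w ∈ T ∧ w ≠ x from ⟨hwT, hwx⟩), if_pos hwT, hdww]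
      · rw [if_neg (show ¬(w ∈ T ∧ w ≠ x) from fun hh => hwT hh.1), if_neg hwT]
    · by_cases htx : t = x
      · rw [htx]
        rw [if_neg (show ¬(x ∈ T ∧ x ≠ x) from fun hh => hh.2 rfl),
          if_neg (show ¬(x = w) from fun e => hwx e.symm), add_zero]
        by_cases hxT : x ∈ T ∧ x ≠ w
        · rw [if_pos hxT, hdx]
        · rw [if_neg hxT]
      · rw [if_neg htw, add_zero]
        simp [htw, htx]
  have step2 : Delta' G G' s x
      = ∑ w ∈ Finset.univ,
          ((if x ∈ G'.pred s w ∧ w ∈ T then g w * (1 + Delta' G G' s w) else 0)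
          + (if x ∈ G'.pred s w ∧ w ∉ T then g w * Delta' G G' s w else 0)) := by
    rw [step1]
    refine Finset.sum_congr rfl fun w _ => ?_
    by_cases hw : x ∈ G'.pred s w
    · rw [if_pos hw, hinner w hw, ← hDelta w]
      by_cases hwT : w ∈ T
      · rw [if_pos hwT, if_pos (show x ∈ G'.pred s w ∧ w ∈ T from ⟨hw, hwT⟩),
          if_neg (show ¬(x ∈ G'.pred s w ∧ w ∉ T) from fun hh => hh.2 hwT), add_zero]
        ring
      · rw [if_neg hwT, if_neg (show ¬(x ∈ G'.pred s w ∧ w ∈ T) from fun hh => hwT hh.2),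
          if_pos (show x ∈ G'.pred s w ∧ w ∉ T from ⟨hw, hwT⟩), zero_add, add_zero]
    · rw [if_neg hw, if_neg (show ¬(x ∈ G'.pred s w ∧ w ∈ T) from fun hh => hw hh.1),
        if_neg (show ¬(x ∈ G'.pred s w ∧ w ∉ T) from fun hh => hw hh.1), add_zero]
  rw [step2, Finset.sum_add_distrib]
  congr 1
  · rw [hfin, Finset.sum_filter]
    refine Finset.sum_congr rfl fun w _ => ?_
    by_cases h : x ∈ G'.pred s w ∧ w ∈ T
    · rw [if_pos h, if_pos (by exact h)]
    · rw [if_neg h, if_neg (by exact h)]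
  · rw [hfin, Finset.sum_filter]
    refine Finset.sum_congr rfl fun w _ => ?_
    by_cases h : x ∈ G'.pred s w ∧ w ∉ T
    · rw [if_pos h, if_pos (by exact h)]
    · rw [if_neg h, if_neg (by exact h)]

end WDigraph
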